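/- For every integer k ≥ 2, the minimum of the dominator chromatic number χ_d(D) over all orientations D of the path P_{4k+2} equals k+3. -/

import Mathlib

/-- A vertex `v` dominates the color class of color `a` under coloring `c`:
the class is nonempty and every vertex of that color is an out-neighbor of `v`. -/
def Dominates {V α : Type*} (A : V → V → Prop) (c : V → α) (v : V) (a : α) : Prop :=
  (∃ w, c w = a) ∧ ∀ w, c w = a → A v w

/-- A dominator coloring of the digraph with arc relation `A`: a proper coloring
such that every vertex with positive out-degree dominates some color class. -/
def IsDominatorColoring {V α : Type*} (A : V → V → Prop) (c : V → α) : Prop :=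
  (∀ u v, A u v → c u ≠ c v) ∧ ∀ v, (∃ w, A v w) → ∃ a, Dominates A c v a

/-- The dominator chromatic number: the least `k` admitting a dominator coloring
with colors in `Fin k`. -/
noncomputable def domChrom {V : Type*} (A : V → V → Prop) : ℕ :=
  sInf {k | ∃ c : V → Fin k, IsDominatorColoring A c}

/-- The arc relation of the orientation of the path `P_n` (vertices `0,…,n-1`)
determined by `o`: the edge between `i` and `i+1` is directed `i → i+1`
when `o i = true` and `i+1 → i` when `o i = false`. -/
def pathArc (n : ℕ) (o : ℕ → Bool) (u v : Fin n) : Prop :=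
  ((u : ℕ) + 1 = (v : ℕ) ∧ o u = true) ∨ ((v : ℕ) + 1 = (u : ℕ) ∧ o v = false)

/-- The minimum of the dominator chromatic number over all orientations of `P_n`. -/
noncomputable def minDomChromPath (n : ℕ) : ℕ :=
  sInf {m | ∃ o : ℕ → Bool, m = domChrom (pathArc n o)}

-- helpers
open Classical in
noncomputable def pick {V α : Type*} (A : V → V → Prop) (c : V → α) (v : V) : α :=
  if hv : ∃ a, Dominates A c v a then hv.choose else c v

lemma pick_spec {V α : Type*} (A : V → V → Prop) (c : V → α) (v : V)
    (hv : ∃ a, Dominates A c v a) : Dominates A c v (pick A c v) := by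
  classical
  rw [pick]
  rw [dif_pos hv]
  exact hv.choose_spec

lemma card_le_two_of_pair {V : Type*} [DecidableEq V] {s : Finset V} {p q : V}
    (h : ∀ x ∈ s, x = p ∨ x = q) : s.card ≤ 2 := by
  have hsub : s ⊆ {p, q} := by
    intro x hx; rcases h x hx with rfl | rfl <;> simp
  refine (Finset.card_le_card hsub).trans ?_
  refine (Finset.card_insert_le _ _).trans ?_
  simp

lemma arc_cases {n : ℕ} {o : ℕ → Bool} {u v : Fin n} (h : pathArc n o u v) :
    (v : ℕ) = (u : ℕ) + 1 ∨ (v : ℕ) + 1 = (u : ℕ) := by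
  rcases h with ⟨h, _⟩ | ⟨h, _⟩
  · exact Or.inl h.symm
  · exact Or.inr h

lemma exists_col (n : ℕ) (o : ℕ → Bool) :
    ∃ c : Fin n → Fin n, IsDominatorColoring (pathArc n o) c := by
  refine ⟨id, fun u v huv => ?_, fun v hv => ?_⟩
  · intro heq
    simp only [id] at heq
    subst heq
    rcases arc_cases huv with h | h <;> omega
  · obtain ⟨w, hw⟩ := hv
    refine ⟨w, ⟨w, rfl⟩, fun y hy => ?_⟩
    have : y = w := hy
    rw [this]; exact hw

def o0 : ℕ → Bool := fun i => decide (i % 2 = 0)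

def c0v (x : ℕ) : ℕ := if x % 2 = 0 then 0 else if x % 4 = 3 then 1 else x / 4 + 2

def c0 (k : ℕ) (v : Fin (4*k+2)) : Fin (k+3) :=
  ⟨c0v (v : ℕ), by have := v.isLt; simp only [c0v]; split_ifs <;> omega⟩

lemma c0_dominator (k : ℕ) : IsDominatorColoring (pathArc (4*k+2) o0) (c0 k) := by
  constructor
  · intro u v huv heq
    have hpar : ((u:ℕ) + 1 = (v:ℕ) ∧ (u:ℕ) % 2 = 0) ∨ ((v:ℕ) + 1 = (u:ℕ) ∧ (v:ℕ) % 2 = 1) := by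
      rcases huv with ⟨h1, h2⟩ | ⟨h1, h2⟩
      · exact Or.inl ⟨h1, by simpa [o0] using h2⟩
      · exact Or.inr ⟨h1, by simpa [o0] using h2⟩
    have heq' : c0v (u:ℕ) = c0v (v:ℕ) := congrArg Fin.val heq
    simp only [c0v] at heq'
    split_ifs at heq' <;> omega
  · intro v hv
    have hv2 : (v:ℕ) % 2 = 0 := by
      obtain ⟨w, hw⟩ := hv
      rcases hw with ⟨h1, h2⟩ | ⟨h1, h2⟩
      · simpa [o0] using h2
      · have h3 : (w:ℕ) % 2 = 1 := by simpa [o0] using h2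
        omega
    have hvle : (v:ℕ) ≤ 4*k := by have := v.isLt; omega
    refine ⟨⟨(v:ℕ)/4 + 2, by omega⟩, ⟨⟨4*((v:ℕ)/4)+1, by omega⟩, ?_⟩, ?_⟩
    · apply Fin.ext
      show c0v (4*((v:ℕ)/4)+1) = (v:ℕ)/4 + 2
      simp only [c0v]; split_ifs <;> omega
    · intro w hw
      have hwv : c0v (w:ℕ) = (v:ℕ)/4 + 2 := congrArg Fin.val hw
      have hwlt := w.isLt
      have hw1 : (w:ℕ) = 4*((v:ℕ)/4)+1 := by
        simp only [c0v] at hwv; split_ifs at hwv <;> omega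
      rcases (by omega : (v:ℕ) % 4 = 0 ∨ (v:ℕ) % 4 = 2) with h4 | h4
      · left
        refine ⟨by omega, ?_⟩
        simp only [o0, decide_eq_true_eq]
        omega
      · right
        refine ⟨by omega, ?_⟩
        simp only [o0, decide_eq_false_iff_not]
        omega

lemma lower_bound (k : ℕ) (hk : 2 ≤ k) (o : ℕ → Bool) (m : ℕ)
    (c : Fin (4*k+2) → Fin m) (hc : IsDominatorColoring (pathArc (4*k+2) o) c) :
    k + 3 ≤ m := by
  classical
  -- adjacent vertices get different colors
  have adj_ne : ∀ u v : Fin (4*k+2), (u:ℕ) + 1 = (v:ℕ) → c u ≠ c v := by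
    intro u v huv
    cases hbo : o (u:ℕ) with
    | true => exact hc.1 u v (Or.inl ⟨huv, hbo⟩)
    | false => exact (hc.1 v u (Or.inr ⟨huv, hbo⟩)).symm
  -- the set of vertices with positive out-degree
  set D : Finset (Fin (4*k+2)) :=
    Finset.univ.filter (fun v => ∃ w, pathArc (4*k+2) o v w) with hDdef
  have hD : ∀ v ∈ D, ∃ a, Dominates (pathArc (4*k+2) o) c v a := fun v hv =>
    hc.2 v (Finset.mem_filter.mp hv).2
  have hDmem : ∀ v w : Fin (4*k+2), pathArc (4*k+2) o v w → v ∈ D := fun v w hw =>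
    Finset.mem_filter.mpr ⟨Finset.mem_univ _, ⟨w, hw⟩⟩
  -- D has at least 2k+1 elements
  have hDcard : 2*k+1 ≤ D.card := by
    have hle : (Finset.univ : Finset (Fin (2*k+1))).card ≤ D.card := by
      apply Finset.card_le_card_of_injOn
        (fun (i : Fin (2*k+1)) => if o (2*(i:ℕ)) = true then (⟨2*(i:ℕ), by have := i.isLt; omega⟩ : Fin (4*k+2))
          else ⟨2*(i:ℕ)+1, by have := i.isLt; omega⟩)
      · intro i _
        by_cases hoi : o (2*(i:ℕ)) = true
        · simp only [if_pos hoi]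
          refine hDmem _ ⟨2*(i:ℕ)+1, by have := i.isLt; omega⟩ (Or.inl ⟨rfl, ?_⟩)
          exact hoi
        · simp only [if_neg hoi]
          refine hDmem _ ⟨2*(i:ℕ), by have := i.isLt; omega⟩ (Or.inr ⟨rfl, ?_⟩)
          simpa using hoi
      · intro i _ j _ hij
        have h2 := congrArg Fin.val hij
        dsimp only at h2
        apply Fin.ext
        split_ifs at h2 <;> simp at h2 <;> omega
    simpa using hle
  -- the color classes and the chosen dominated color
  set C : Fin m → Finset (Fin (4*k+2)) :=
    (fun a => Finset.univ.filter (fun x => c x = a)) with hCdef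
  set h : Fin (4*k+2) → Fin m := fun v => pick (pathArc (4*k+2) o) c v with hhdef
  have hhv : ∀ v ∈ D, Dominates (pathArc (4*k+2) o) c v (h v) := fun v hv =>
    pick_spec _ _ _ (hD v hv)
  set H : Finset (Fin m) := D.image h with hHdef
  set fib : Fin m → Finset (Fin (4*k+2)) := fun a => D.filter (fun v => h v = a) with hfibdef
  -- every color class has at most 2k+1 elements (independence)
  have class_le : ∀ a : Fin m, (C a).card ≤ 2*k+1 := by
    intro a
    have hle : (C a).card ≤ (Finset.univ : Finset (Fin (2*k+1))).card := by
      apply Finset.card_le_card_of_injOn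
        (fun (x : Fin (4*k+2)) => (⟨(x:ℕ)/2, by have := x.isLt; omega⟩ : Fin (2*k+1)))
      · intro x _; exact Finset.mem_univ _
      · intro x hx y hy hxy
        simp only [Fin.mk.injEq] at hxy
        by_contra hne
        have hx' := (Finset.mem_filter.mp hx).2
        have hy' := (Finset.mem_filter.mp hy).2
        have hne' : (x:ℕ) ≠ (y:ℕ) := fun hh => hne (Fin.ext hh)
        have hcase : (x:ℕ)+1 = (y:ℕ) ∨ (y:ℕ)+1 = (x:ℕ) := by omega
        cases hcase with
        | inl hh => exact adj_ne x y hh (by rw [hx', hy'])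
        | inr hh => exact adj_ne y x hh (by rw [hy', hx'])
    simpa using hle
  -- key per-color bounds for colors in H
  have key : ∀ a ∈ H, (fib a).card ≤ 2 ∧ (C a).card + (fib a).card ≤ 3 := by
    intro a ha
    obtain ⟨v, hvD, hva⟩ := Finset.mem_image.mp ha
    have hdomv : Dominates (pathArc (4*k+2) o) c v a := hva ▸ hhv v hvD
    obtain ⟨⟨x, hx⟩, hall⟩ := hdomv
    have hfib2 : (fib a).card ≤ 2 := by
      apply card_le_two_of_pair
        (p := (⟨(x:ℕ) - 1, by have := x.isLt; omega⟩ : Fin (4*k+2)))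
        (q := (⟨if (x:ℕ)+1 < 4*k+2 then (x:ℕ)+1 else 0, by split_ifs <;> omega⟩ : Fin (4*k+2)))
      intro u hu
      obtain ⟨huD, hua⟩ := Finset.mem_filter.mp hu
      have hdomu : Dominates (pathArc (4*k+2) o) c u a := hua ▸ hhv u huD
      rcases arc_cases (hdomu.2 x hx) with h1 | h1
      · left; apply Fin.ext; simp; omega
      · right; apply Fin.ext
        have hul := u.isLt
        simp only
        split_ifs <;> omega
    have hC2 : (C a).card ≤ 2 := by
      apply card_le_two_of_pair
        (p := (⟨(v:ℕ) - 1, by have := v.isLt; omega⟩ : Fin (4*k+2)))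
        (q := (⟨if (v:ℕ)+1 < 4*k+2 then (v:ℕ)+1 else 0, by split_ifs <;> omega⟩ : Fin (4*k+2)))
      intro y hy
      have hya := (Finset.mem_filter.mp hy).2
      rcases arc_cases (hall y hya) with h1 | h1
      · right; apply Fin.ext
        have hyl := y.isLt
        simp only
        split_ifs <;> omega
      · left; apply Fin.ext; simp; omega
    refine ⟨hfib2, ?_⟩
    by_cases h1 : (fib a).card ≤ 1
    · omega
    · have h2 := Finset.one_lt_card.mp (show 1 < (fib a).card by omega)
      obtain ⟨u1, hu1, u2, hu2, hne⟩ := h2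
      have hd1 : Dominates (pathArc (4*k+2) o) c u1 a :=
        (Finset.mem_filter.mp hu1).2 ▸ hhv u1 (Finset.mem_filter.mp hu1).1
      have hd2 : Dominates (pathArc (4*k+2) o) c u2 a :=
        (Finset.mem_filter.mp hu2).2 ▸ hhv u2 (Finset.mem_filter.mp hu2).1
      have hne' : (u1:ℕ) ≠ (u2:ℕ) := fun hh => hne (Fin.ext hh)
      have hC1 : (C a).card ≤ 1 := by
        apply Finset.card_le_one.mpr
        intro y hy z hz
        have hy' := (Finset.mem_filter.mp hy).2
        have hz' := (Finset.mem_filter.mp hz).2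
        have a1 := arc_cases (hd1.2 y hy')
        have a2 := arc_cases (hd2.2 y hy')
        have a3 := arc_cases (hd1.2 z hz')
        have a4 := arc_cases (hd2.2 z hz')
        apply Fin.ext; omega
      omega
  -- assembling the count
  have total : 4*k+2 = ∑ a : Fin m, (C a).card := by
    have ht := Finset.card_eq_sum_card_fiberwise
      (s := (Finset.univ : Finset (Fin (4*k+2)))) (t := (Finset.univ : Finset (Fin m)))
      (f := c) (fun x _ => Finset.mem_univ _)
    simpa [hCdef] using ht
  have hDsum : D.card = ∑ a ∈ H, (fib a).card := by
    apply Finset.card_eq_sum_card_fiberwise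
    intro v hv
    exact Finset.mem_image_of_mem h hv
  have hsplit : ∑ a ∈ Finset.univ \ H, (C a).card + ∑ a ∈ H, (C a).card
      = ∑ a : Fin m, (C a).card := Finset.sum_sdiff (Finset.subset_univ H)
  have hHsum : ∑ a ∈ H, (C a).card + D.card ≤ 3 * H.card := by
    rw [hDsum, ← Finset.sum_add_distrib]
    calc ∑ a ∈ H, ((C a).card + (fib a).card) ≤ H.card • 3 :=
          Finset.sum_le_card_nsmul _ _ _ (fun a ha => (key a ha).2)
      _ = 3 * H.card := by rw [smul_eq_mul]; ring
  have hD2l : D.card ≤ 2 * H.card := by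
    rw [hDsum]
    calc ∑ a ∈ H, (fib a).card ≤ H.card • 2 :=
          Finset.sum_le_card_nsmul _ _ _ (fun a ha => (key a ha).1)
      _ = 2 * H.card := by rw [smul_eq_mul]; ring
  have hHle : H.card ≤ m := by simpa using Finset.card_le_univ H
  set R : ℕ := (m - H.card) * (2*k+1) with hRdef
  have hrest : ∑ a ∈ Finset.univ \ H, (C a).card ≤ R := by
    calc ∑ a ∈ Finset.univ \ H, (C a).card ≤ (Finset.univ \ H).card • (2*k+1) :=
          Finset.sum_le_card_nsmul _ _ _ (fun a _ => class_le a)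
      _ = R := by
          rw [smul_eq_mul, Finset.card_sdiff_of_subset (Finset.subset_univ H)]
          simp [hRdef]
  have hfin : 4*k+2 + D.card ≤ 3 * H.card + R := by
    have e1 : 4*k+2 = ∑ a ∈ Finset.univ \ H, (C a).card + ∑ a ∈ H, (C a).card := by
      rw [hsplit, ← total]
    omega
  -- final arithmetic
  by_contra hcon
  push_neg at hcon
  have hm : m ≤ k + 2 := by omega
  have hl1 : k+1 ≤ H.card := by omega
  have hcase : m - H.card = 0 ∨ m - H.card = 1 := by omega
  rcases hcase with h0 | h0 <;> rw [h0] at hRdef <;> simp at hRdef <;> omega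


lemma lower_all (k : ℕ) (hk : 2 ≤ k) (o : ℕ → Bool) :
    k + 3 ≤ domChrom (pathArc (4*k+2) o) := by
  have hne : {m | ∃ c : Fin (4*k+2) → Fin m,
      IsDominatorColoring (pathArc (4*k+2) o) c}.Nonempty :=
    ⟨4*k+2, exists_col _ o⟩
  obtain ⟨c, hcc⟩ := Nat.sInf_mem hne
  exact lower_bound k hk o _ c hcc


theorem min_domChrom_orientations_of_path_four_k_add_two (k : ℕ) (hk : 2 ≤ k) :
    minDomChromPath (4 * k + 2) = k + 3 := by
  have hup : domChrom (pathArc (4*k+2) o0) ≤ k + 3 :=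
    Nat.sInf_le ⟨c0 k, c0_dominator k⟩
  have heq : domChrom (pathArc (4*k+2) o0) = k + 3 :=
    le_antisymm hup (lower_all k hk o0)
  have hmem : k + 3 ∈ {m | ∃ o : ℕ → Bool, m = domChrom (pathArc (4*k+2) o)} :=
    ⟨o0, heq.symm⟩
  apply le_antisymm
  · exact Nat.sInf_le hmem
  · apply le_csInf ⟨_, hmem⟩
    rintro b ⟨o, rfl⟩
    exact lower_all k hk o
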